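/- Let n ≥ 2 be an integer and g(x) = P(Bin(2n,x) ≥ n) − x. Then g has a unique root x* in the open interval (0, 1/2), and g(x) < 0 for all x ∈ (0, x*). -/

import Mathlib

set_option linter.unusedVariables false
set_option linter.unusedTactic false
set_option linter.deprecated false
open Finset Set Filter

lemma choose_id1 (n k : ℕ) (hn : 1 ≤ n) (hk1 : n ≤ k) (hk2 : k ≤ 2*n) :
    2*n * (2*n-1).choose (k-1) = (2*n).choose k * k := by
  have h := Nat.add_one_mul_choose_eq (2*n-1) (k-1)
  have h1 : 2*n-1+1 = 2*n := by omega
  have h2 : k-1+1 = k := by omega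
  rwa [h1, h2] at h

lemma choose_id2 (n k : ℕ) (hn : 1 ≤ n) (hk2 : k ≤ 2*n) :
    2*n * (2*n-1).choose k = (2*n).choose k * (2*n - k) := by
  rcases eq_or_lt_of_le hk2 with rfl | hlt
  · rw [Nat.choose_eq_zero_of_lt (by omega)]
    simp
  · have hks : k ≤ 2*n-1 := by omega
    have h := Nat.add_one_mul_choose_eq (2*n-1) (2*n-1-k)
    have h1 : 2*n-1+1 = 2*n := by omega
    have h2 : 2*n-1-k+1 = 2*n - k := by omega
    rw [h1, h2, Nat.choose_symm hks, Nat.choose_symm hk2] at h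
    exact h

lemma hasDerivAt_F (n : ℕ) (hn : 1 ≤ n) (x : ℝ) :
    HasDerivAt (fun x : ℝ => ∑ k ∈ Finset.Icc n (2*n), ((2*n).choose k : ℝ) * x ^ k * (1-x) ^ (2*n-k))
      ((2*n : ℝ) * ((2*n-1).choose (n-1) : ℝ) * x^(n-1) * (1-x)^n) x := by
  set b : ℕ → ℝ := fun j => ((2*n-1).choose j : ℝ) * x^j * (1-x)^(2*n-1-j) with hb
  have hterm : ∀ k ∈ Finset.Icc n (2*n),
      HasDerivAt (fun x : ℝ => ((2*n).choose k : ℝ) * x ^ k * (1-x) ^ (2*n-k))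
        ((2*n : ℝ) * (b (k-1) - b k)) x := by
    intro k hk
    simp only [Finset.mem_Icc] at hk
    have h1 : HasDerivAt (fun x : ℝ => x ^ k) ((k:ℝ) * x^(k-1)) x := hasDerivAt_pow k x
    have h2 : HasDerivAt (fun x : ℝ => (1-x) ^ (2*n-k))
        (((2*n-k : ℕ):ℝ) * (1-x)^(2*n-k-1) * (-1)) x :=
      (((hasDerivAt_id x).const_sub 1).pow _)
    have h := (h1.const_mul (((2*n).choose k : ℝ))).mul h2
    refine h.congr_deriv (Eq.symm ?_)
    have e1 : ((2*n).choose k : ℝ) * (k:ℝ) = (2*(n:ℝ)) * ((2*n-1).choose (k-1) : ℝ) := by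
      exact_mod_cast congrArg (Nat.cast : ℕ → ℝ) (choose_id1 n k hn hk.1 hk.2).symm
    have e2 : ((2*n).choose k : ℝ) * ((2*n-k : ℕ):ℝ) = (2*(n:ℝ)) * ((2*n-1).choose k : ℝ) := by
      exact_mod_cast congrArg (Nat.cast : ℕ → ℝ) (choose_id2 n k hn hk.2).symm
    have ex1 : 2*n-1-(k-1) = 2*n-k := by omega
    have ex2 : 2*n-k-1 = 2*n-1-k := by omega
    simp only [hb, ex1, ex2]
    push_cast
    linear_combination (x ^ (k - 1) * (1 - x) ^ (2*n - k)) * e1.symm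
      + (x ^ k * (1-x)^(2*n-1-k)) * e2
  have hsum := HasDerivAt.fun_sum hterm
  refine hsum.congr_deriv (Eq.symm ?_)
  rw [← Finset.mul_sum]
  have : Finset.Icc n (2*n) = Finset.Ico n (2*n+1) := by rw [Finset.Ico_add_one_right_eq_Icc]
  rw [this, Finset.sum_Ico_eq_sum_range]
  have hr : 2*n+1-n = n+1 := by omega
  rw [hr]
  have : ∀ k, n + k - 1 = n - 1 + k := by omega
  have hcong : ∑ k ∈ range (n+1), (b (n+k-1) - b (n+k))
      = ∑ k ∈ range (n+1), ((fun i => b (n-1+i)) k - (fun i => b (n-1+i)) (k+1)) := by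
    apply Finset.sum_congr rfl
    intro k _
    have : n + k - 1 = n - 1 + k := by omega
    have h2 : n + k = n - 1 + (k+1) := by omega
    rw [this, h2]
  rw [hcong, Finset.sum_range_sub']
  have h20 : n - 1 + (n+1) = 2*n := by omega
  have hb2n : b (2*n) = 0 := by
    simp only [hb]
    rw [Nat.choose_eq_zero_of_lt (by omega)]
    simp
  rw [h20, hb2n, sub_zero]
  simp only [hb, Nat.add_zero]
  have : 2*n-1-(n-1) = n := by omega
  rw [this]
  push_cast
  ring


noncomputable def gfun (n : ℕ) : ℝ → ℝ := fun x =>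
  (∑ k ∈ Finset.Icc n (2 * n), ((2 * n).choose k : ℝ) * x ^ k * (1 - x) ^ (2 * n - k)) - x

noncomputable def cst (n : ℕ) : ℝ := (2*n : ℝ) * ((2*n-1).choose (n-1) : ℝ)

lemma cst_pos (n : ℕ) (hn : 1 ≤ n) : 0 < cst n := by
  unfold cst
  have h1 : (0:ℝ) < (2*n : ℝ) := by positivity
  have h2 : 0 < (2*n-1).choose (n-1) := Nat.choose_pos (by omega)
  have h2' : (0:ℝ) < ((2*n-1).choose (n-1) : ℝ) := by exact_mod_cast h2
  positivity

lemma hasDerivAt_g (n : ℕ) (hn : 1 ≤ n) (x : ℝ) :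
    HasDerivAt (gfun n) (cst n * x^(n-1) * (1-x)^n - 1) x := by
  have h := (hasDerivAt_F n hn x).sub (hasDerivAt_id x)
  unfold gfun cst
  exact h

lemma deriv_g (n : ℕ) (hn : 1 ≤ n) :
    deriv (gfun n) = fun x => cst n * x^(n-1) * (1-x)^n - 1 := by
  funext x
  exact (hasDerivAt_g n hn x).deriv

lemma hasDerivAt_g' (n : ℕ) (hn : 1 ≤ n) (x : ℝ) :
    HasDerivAt (fun x : ℝ => cst n * x^(n-1) * (1-x)^n - 1)
      (cst n * (((n-1:ℕ):ℝ) * x^(n-2)) * (1-x)^n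
        + cst n * x^(n-1) * ((n:ℝ) * (1-x)^(n-1) * (-1))) x := by
  have h1 : HasDerivAt (fun x : ℝ => x ^ (n-1)) (((n-1:ℕ):ℝ) * x^(n-1-1)) x := hasDerivAt_pow _ x
  have h2 : HasDerivAt (fun x : ℝ => (1-x) ^ n) ((n:ℝ) * (1-x)^(n-1) * (-1)) x :=
    ((hasDerivAt_id x).const_sub 1).pow _
  have h := ((h1.const_mul (cst n)).mul h2).sub_const 1
  have hnn : n-1-1 = n-2 := by omega
  rw [hnn] at h
  exact h

lemma deriv2_g (n : ℕ) (hn : 1 ≤ n) (x : ℝ) :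
    deriv^[2] (gfun n) x
      = cst n * (((n-1:ℕ):ℝ) * x^(n-2)) * (1-x)^n
        + cst n * x^(n-1) * ((n:ℝ) * (1-x)^(n-1) * (-1)) := by
  have : deriv^[2] (gfun n) = deriv (deriv (gfun n)) := by
    rw [Function.iterate_succ, Function.iterate_one]
    rfl
  rw [this, deriv_g n hn]
  exact (hasDerivAt_g' n hn x).deriv

lemma deriv2_factored (n : ℕ) (hn : 2 ≤ n) (x : ℝ) :
    deriv^[2] (gfun n) x
      = cst n * x^(n-2) * (1-x)^(n-1) * (((n:ℝ)-1) - (2*(n:ℝ)-1)*x) := by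
  rw [deriv2_g n (by omega) x]
  have hx1 : x^(n-1) = x^(n-2) * x := by
    rw [← pow_succ]
    congr 1
    omega
  have hx2 : (1-x)^n = (1-x)^(n-1) * (1-x) := by
    rw [← pow_succ]
    congr 1
    omega
  have hcast : ((n-1:ℕ):ℝ) = (n:ℝ) - 1 := by
    have : 1 ≤ n := by omega
    push_cast [this]
    ring
  rw [hx1, hx2, hcast]
  ring

noncomputable def mpt (n : ℕ) : ℝ := ((n:ℝ)-1)/(2*(n:ℝ)-1)

lemma mpt_mem (n : ℕ) (hn : 2 ≤ n) : 0 < mpt n ∧ mpt n < 1/2 := by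
  unfold mpt
  have h1 : (0:ℝ) < 2*(n:ℝ)-1 := by
    have : (2:ℝ) ≤ (n:ℝ) := by exact_mod_cast hn
    linarith
  constructor
  · apply div_pos _ h1
    have : (2:ℝ) ≤ (n:ℝ) := by exact_mod_cast hn
    linarith
  · rw [div_lt_iff₀ h1]
    have : (2:ℝ) ≤ (n:ℝ) := by exact_mod_cast hn
    linarith

lemma strictConvex_g (n : ℕ) (hn : 2 ≤ n) :
    StrictConvexOn ℝ (Set.Icc (0:ℝ) (mpt n)) (gfun n) := by
  apply strictConvexOn_of_deriv2_pos (convex_Icc _ _)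
  · have hdiff : Differentiable ℝ (gfun n) := fun x => (hasDerivAt_g n (by omega) x).differentiableAt
    exact hdiff.continuous.continuousOn
  · intro x hx
    rw [interior_Icc, Set.mem_Ioo] at hx
    rw [deriv2_factored n hn x]
    have hc := cst_pos n (by omega)
    have hm := mpt_mem n hn
    have hx1 : 0 < x := hx.1
    have hx2 : x < 1 := by linarith [hx.2, hm.2]
    have hden : (0:ℝ) < 2*(n:ℝ)-1 := by
      have : (2:ℝ) ≤ (n:ℝ) := by exact_mod_cast hn
      linarith
    have hbr : 0 < ((n:ℝ)-1) - (2*(n:ℝ)-1)*x := by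
      have := hx.2
      unfold mpt at this
      rw [lt_div_iff₀ hden] at this
      linarith
    have h1x : (0:ℝ) < 1 - x := by linarith
    positivity

lemma strictConcave_g (n : ℕ) (hn : 2 ≤ n) :
    StrictConcaveOn ℝ (Set.Icc (mpt n) 1) (gfun n) := by
  apply strictConcaveOn_of_deriv2_neg (convex_Icc _ _)
  · have hdiff : Differentiable ℝ (gfun n) := fun x => (hasDerivAt_g n (by omega) x).differentiableAt
    exact hdiff.continuous.continuousOn
  · intro x hx
    rw [interior_Icc, Set.mem_Ioo] at hx
    rw [deriv2_factored n hn x]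
    have hc := cst_pos n (by omega)
    have hm := mpt_mem n hn
    have hx1 : 0 < x := lt_trans hm.1 hx.1
    have hx2 : x < 1 := hx.2
    have hden : (0:ℝ) < 2*(n:ℝ)-1 := by
      have : (2:ℝ) ≤ (n:ℝ) := by exact_mod_cast hn
      linarith
    have hbr : ((n:ℝ)-1) - (2*(n:ℝ)-1)*x < 0 := by
      have := hx.1
      unfold mpt at this
      rw [div_lt_iff₀ hden] at this
      linarith
    have h1x : (0:ℝ) < 1 - x := by linarith
    have hfac : 0 < cst n * x^(n-2) * (1-x)^(n-1) := by positivity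
    exact mul_neg_of_pos_of_neg hfac hbr

lemma gval0 (n : ℕ) (hn : 1 ≤ n) : gfun n 0 = 0 := by
  unfold gfun
  rw [Finset.sum_eq_zero, sub_zero]
  intro k hk
  simp only [Finset.mem_Icc] at hk
  rw [zero_pow (by omega : k ≠ 0)]
  ring

lemma gval1 (n : ℕ) (hn : 1 ≤ n) : gfun n 1 = 0 := by
  unfold gfun
  rw [Finset.sum_eq_single (2*n)]
  · simp
  · intro k hk hne
    simp only [Finset.mem_Icc] at hk
    rw [sub_self, zero_pow (by omega : 2*n - k ≠ 0)]
    ring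
  · intro h
    exact absurd (Finset.mem_Icc.2 ⟨Nat.le_mul_of_pos_left n (by norm_num), le_refl _⟩) h

lemma sum_choose_half (n : ℕ) :
    2 * (∑ k ∈ Finset.Icc n (2*n), (2*n).choose k) = 2^(2*n) + (2*n).choose n := by
  set S' := ∑ k ∈ Finset.range n, (2*n).choose k with hS'
  have htot : ∑ k ∈ Finset.range (2*n+1), (2*n).choose k = 2^(2*n) := Nat.sum_range_choose (2*n)
  have hsplit : ∑ k ∈ Finset.range (2*n+1), (2*n).choose k
      = S' + ∑ k ∈ Finset.Icc n (2*n), (2*n).choose k := by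
    rw [← Finset.Ico_add_one_right_eq_Icc, Finset.range_eq_Ico, hS', Finset.range_eq_Ico]
    rw [← Finset.sum_Ico_consecutive _ (by omega : 0 ≤ n) (by omega : n ≤ 2*n+1)]
  have hrefl : ∑ k ∈ Finset.Icc n (2*n), (2*n).choose k
      = S' + (2*n).choose n := by
    rw [← Finset.Ico_add_one_right_eq_Icc, Finset.sum_Ico_eq_sum_range]
    have h1 : 2*n+1-n = n+1 := by omega
    rw [h1]
    have h2 : ∀ i ∈ Finset.range (n+1), (2*n).choose (n+i) = (2*n).choose (n-i) := by
      intro i hi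
      simp only [Finset.mem_range] at hi
      rw [← Nat.choose_symm (by omega : n+i ≤ 2*n)]
      congr 1
      omega
    rw [Finset.sum_congr rfl h2]
    have h3 : ∑ i ∈ Finset.range (n+1), (2*n).choose (n-i)
        = ∑ i ∈ Finset.range (n+1), (2*n).choose i := by
      have := Finset.sum_range_reflect (fun j => (2*n).choose j) (n+1)
      simpa using this
    rw [h3, Finset.sum_range_succ]
  omega

lemma gval_half (n : ℕ) (hn : 1 ≤ n) : 0 < gfun n (1/2 : ℝ) := by
  unfold gfun
  have hterm : ∀ k ∈ Finset.Icc n (2*n),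
      ((2*n).choose k : ℝ) * (1/2:ℝ)^k * (1 - 1/2)^(2*n-k)
        = ((2*n).choose k : ℝ) * (1/2:ℝ)^(2*n) := by
    intro k hk
    simp only [Finset.mem_Icc] at hk
    have : (1:ℝ) - 1/2 = 1/2 := by norm_num
    rw [this, mul_assoc, ← pow_add]
    congr 2
    omega
  rw [Finset.sum_congr rfl hterm, ← Finset.sum_mul]
  have hS : (2:ℝ) * (∑ k ∈ Finset.Icc n (2*n), ((2*n).choose k : ℝ)) > 2^(2*n) := by
    have h := sum_choose_half n
    have hpos : 0 < (2*n).choose n := Nat.choose_pos (by omega)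
    have : (2:ℕ) ^(2*n) < 2 * (∑ k ∈ Finset.Icc n (2*n), (2*n).choose k) := by omega
    exact_mod_cast (by push_cast; exact_mod_cast this :
      (2:ℝ)^(2*n) < 2 * (∑ k ∈ Finset.Icc n (2*n), ((2*n).choose k:ℝ)))
  have hp : (0:ℝ) < 2^(2*n) := by positivity
  have hhalf : (1/2:ℝ)^(2*n) = 1/2^(2*n) := by
    rw [one_div, inv_pow, one_div]
  rw [hhalf, sub_pos, mul_one_div, lt_div_iff₀ hp]
  linarith

lemma convex_lt_zero {f : ℝ → ℝ} {s : Set ℝ} (hf : StrictConvexOn ℝ s f) {a b x : ℝ}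
    (ha : a ∈ s) (hb : b ∈ s) (h1 : a < x) (h2 : x < b) (hfa : f a ≤ 0) (hfb : f b ≤ 0) :
    f x < 0 := by
  have hab : a < b := h1.trans h2
  set u := (b-x)/(b-a) with hu
  set v := (x-a)/(b-a) with hv
  have hup : 0 < u := div_pos (by linarith) (by linarith)
  have hvp : 0 < v := div_pos (by linarith) (by linarith)
  have hsum : u + v = 1 := by
    rw [hu, hv, ← add_div]
    rw [show b - x + (x - a) = b - a by ring]
    exact div_self (sub_ne_zero.mpr hab.ne')
  have hx : u • a + v • b = x := by
    have hne : b - a ≠ 0 := by linarith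
    simp only [smul_eq_mul, hu, hv]
    field_simp
    ring
  have h := hf.2 ha hb hab.ne hup hvp hsum
  rw [hx] at h
  simp only [smul_eq_mul] at h
  nlinarith

lemma concave_gt_zero {f : ℝ → ℝ} {s : Set ℝ} (hf : StrictConcaveOn ℝ s f) {a b x : ℝ}
    (ha : a ∈ s) (hb : b ∈ s) (h1 : a < x) (h2 : x < b) (hfa : 0 ≤ f a) (hfb : 0 ≤ f b) :
    0 < f x := by
  have hab : a < b := h1.trans h2
  set u := (b-x)/(b-a) with hu
  set v := (x-a)/(b-a) with hv
  have hup : 0 < u := div_pos (by linarith) (by linarith)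
  have hvp : 0 < v := div_pos (by linarith) (by linarith)
  have hsum : u + v = 1 := by
    rw [hu, hv, ← add_div]
    rw [show b - x + (x - a) = b - a by ring]
    exact div_self (sub_ne_zero.mpr hab.ne')
  have hx : u • a + v • b = x := by
    have hne : b - a ≠ 0 := by linarith
    simp only [smul_eq_mul, hu, hv]
    field_simp
    ring
  have h := hf.2 ha hb hab.ne hup hvp hsum
  rw [hx] at h
  simp only [smul_eq_mul] at h
  nlinarith


lemma g_neg_near_zero (n : ℕ) (hn : 2 ≤ n) (ε : ℝ) (hε : 0 < ε) :
    ∃ x ∈ Set.Ioo (0:ℝ) ε, gfun n x < 0 := by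
  have hd : HasDerivAt (gfun n) (-1) 0 := by
    have h := hasDerivAt_g n (by omega) 0
    have : cst n * (0:ℝ)^(n-1) * (1-0)^n - 1 = -1 := by
      rw [zero_pow (by omega : n - 1 ≠ 0)]
      ring
    rwa [this] at h
  rw [hasDerivAt_iff_tendsto_slope] at hd
  have h1 : Tendsto (slope (gfun n) 0) (nhdsWithin 0 (Set.Ioi 0)) (nhds (-1)) :=
    hd.mono_left (nhdsWithin_mono _ (fun y hy => ne_of_gt hy))
  have h2 : ∀ᶠ x in nhdsWithin (0:ℝ) (Set.Ioi 0), slope (gfun n) 0 x < 0 :=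
    h1.eventually (eventually_lt_nhds (by norm_num))
  have h3 : ∀ᶠ x in nhdsWithin (0:ℝ) (Set.Ioi 0), x ∈ Set.Ioo (0:ℝ) ε :=
    Ioo_mem_nhdsGT_of_mem ⟨le_refl 0, hε⟩
  obtain ⟨x, hx1, hx2⟩ := (h2.and h3).exists
  refine ⟨x, hx2, ?_⟩
  rw [slope_def_field] at hx1
  rw [gval0 n (by omega)] at hx1
  have hxpos : 0 < x := hx2.1
  have : (gfun n x - 0) / (x - 0) < 0 := hx1
  rw [sub_zero, sub_zero, div_neg_iff] at this
  rcases this with ⟨_, h⟩ | ⟨h, _⟩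
  · linarith
  · exact h

theorem main (n : ℕ) (hn : 2 ≤ n) :
    ∃ xs ∈ Set.Ioo (0:ℝ) (1/2), gfun n xs = 0 ∧
      (∀ y ∈ Set.Ioo (0:ℝ) (1/2), gfun n y = 0 → y = xs) ∧
      (∀ x ∈ Set.Ioo (0:ℝ) xs, gfun n x < 0) := by
  have hm := mpt_mem n hn
  have hdiff : Differentiable ℝ (gfun n) := fun x => (hasDerivAt_g n (by omega) x).differentiableAt
  have hcont : Continuous (gfun n) := hdiff.continuous
  have h0 : gfun n 0 = 0 := gval0 n (by omega)
  have h1 : gfun n 1 = 0 := gval1 n (by omega)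
  have hhalf : 0 < gfun n (1/2:ℝ) := gval_half n (by omega)
  have hconv := strictConvex_g n hn
  have hconc := strictConcave_g n hn
  -- existence
  obtain ⟨x0, hx0, hgx0⟩ := g_neg_near_zero n hn (1/2) (by norm_num)
  obtain ⟨xs, hxsmem, hgxs⟩ := intermediate_value_Ioo hx0.2.le hcont.continuousOn
    (Set.mem_Ioo.2 ⟨hgx0, hhalf⟩)
  have hxsIoo : xs ∈ Set.Ioo (0:ℝ) (1/2) := ⟨lt_trans hx0.1 hxsmem.1, hxsmem.2⟩
  -- pairwise uniqueness
  have huniq : ∀ y1 y2 : ℝ, y1 ∈ Set.Ioo (0:ℝ) (1/2) → y2 ∈ Set.Ioo (0:ℝ) (1/2) →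
      gfun n y1 = 0 → gfun n y2 = 0 → y1 < y2 → False := by
    intro y1 y2 hy1 hy2 hg1 hg2 hlt
    rcases le_or_gt y2 (mpt n) with hc | hc
    · have := convex_lt_zero hconv (a := 0) (b := y2) (x := y1)
        ⟨le_refl 0, hm.1.le⟩ ⟨hy2.1.le, hc⟩ hy1.1 hlt h0.le hg2.le
      linarith [this, hg1.le]
    · rcases le_or_gt y1 (mpt n) with hc' | hc'
      · have hgm : 0 ≤ gfun n (mpt n) := by
          rcases eq_or_lt_of_le hc' with heq | hlt'
          · rw [← heq]; exact hg1.ge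
          · by_contra hneg
            push_neg at hneg
            have := convex_lt_zero hconv (a := 0) (b := mpt n) (x := y1)
              ⟨le_refl 0, hm.1.le⟩ ⟨hm.1.le, le_refl _⟩ hy1.1 hlt' h0.le hneg.le
            linarith
        have := concave_gt_zero hconc (a := mpt n) (b := 1) (x := y2)
          ⟨le_refl _, by linarith [hm.2]⟩ ⟨by linarith [hm.2], le_refl (1:ℝ)⟩ hc
          (by linarith [hy2.2]) hgm h1.ge
        linarith
      · have := concave_gt_zero hconc (a := y1) (b := 1) (x := y2)
          ⟨hc'.le, by linarith [hy1.2]⟩ ⟨by linarith [hm.2], le_refl (1:ℝ)⟩ hlt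
          (by linarith [hy2.2]) hg1.ge h1.ge
        linarith
  refine ⟨xs, hxsIoo, hgxs, ?_, ?_⟩
  · intro y hy hgy
    rcases lt_trichotomy y xs with h | h | h
    · exact absurd (huniq y xs hy hxsIoo hgy hgxs h) (fun f => f)
    · exact h
    · exact absurd (huniq xs y hxsIoo hy hgxs hgy h) (fun f => f)
  · intro x hx
    rcases le_or_gt xs (mpt n) with hcase | hcase
    · exact convex_lt_zero hconv (a := 0) (b := xs)
        ⟨le_refl 0, hm.1.le⟩ ⟨hxsIoo.1.le, hcase⟩ hx.1 hx.2 h0.le hgxs.le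
    · rcases le_or_gt x (mpt n) with hxm | hxm
      · by_contra hpos
        push_neg at hpos
        rcases eq_or_lt_of_le hpos with heq | hlt'
        · exact huniq x xs ⟨hx.1, lt_trans hx.2 hxsIoo.2⟩ hxsIoo heq.symm hgxs hx.2
        · obtain ⟨x0', hx0', hgx0'⟩ := g_neg_near_zero n hn x hx.1
          obtain ⟨r, hrmem, hgr⟩ := intermediate_value_Ioo hx0'.2.le hcont.continuousOn
            (Set.mem_Ioo.2 ⟨hgx0', hlt'⟩)
          have hrIoo : r ∈ Set.Ioo (0:ℝ) (1/2) :=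
            ⟨lt_trans hx0'.1 hrmem.1, by linarith [hrmem.2, hx.2, hxsIoo.2]⟩
          exact huniq r xs hrIoo hxsIoo hgr hgxs (by linarith [hrmem.2, hx.2])
      · by_contra hpos
        push_neg at hpos
        have := concave_gt_zero hconc (a := x) (b := 1) (x := xs)
          ⟨hxm.le, by linarith [hx.2, hxsIoo.2]⟩ ⟨by linarith [hm.2], le_refl (1:ℝ)⟩
          hx.2 (by linarith [hxsIoo.2]) hpos h1.ge
        linarith

theorem stmt9 (n : ℕ) (hn : 2 ≤ n) :
    let g : ℝ → ℝ := fun x =>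
      (∑ k ∈ Finset.Icc n (2 * n), ((2 * n).choose k : ℝ) * x ^ k * (1 - x) ^ (2 * n - k)) - x
    ∃ xs ∈ Set.Ioo (0 : ℝ) (1 / 2), g xs = 0 ∧
      (∀ y ∈ Set.Ioo (0 : ℝ) (1 / 2), g y = 0 → y = xs) ∧
      (∀ x ∈ Set.Ioo (0 : ℝ) xs, g x < 0) := by
  intro g
  exact main n hn
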